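/- Let F be a field and let a = (a_{ij}) be a 3×3 matrix over F[[t]] with det a = 1, such that the constant terms of a₂₁ and a₃₁ are zero. Then there exists a unique pair (u₁₂, u₁₃) ∈ F² such that the constant terms of a₁₂ − u₁₂·a₂₂ − u₁₃·a₃₂ and of a₁₃ − u₁₂·a₂₃ − u₁₃·a₃₃ are both zero. (Equivalently: the 2×2 matrix with rows (a₂₂(0), a₃₂(0)) and (a₂₃(0), a₃₃(0)) is invertible, so the linear system with right-hand side (a₁₂(0), a₁₃(0)) has a unique solution.) -/

import Mathlib

noncomputable section

/-- If `a ∈ M₃(F[[t]])` has `det a = 1` and the constant terms of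
`a₂₁` and `a₃₁` vanish, then there is a unique pair `(u₁₂, u₁₃) ∈ F²` such that the
constant terms of `a₁₂ − u₁₂a₂₂ − u₁₃a₃₂` and of `a₁₃ − u₁₂a₂₃ − u₁₃a₃₃` both
vanish. -/
theorem statement12 (F : Type*) [Field F]
    (a : Matrix (Fin 3) (Fin 3) (PowerSeries F)) (ha : a.det = 1)
    (h21 : PowerSeries.constantCoeff (a 1 0) = 0)
    (h31 : PowerSeries.constantCoeff (a 2 0) = 0) :
    ∃! u : F × F,
      PowerSeries.constantCoeff
          (a 0 1 - PowerSeries.C u.1 * a 1 1 - PowerSeries.C u.2 * a 2 1) = 0 ∧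
      PowerSeries.constantCoeff
          (a 0 2 - PowerSeries.C u.1 * a 1 2 - PowerSeries.C u.2 * a 2 2) = 0 := by
  have hdet : (a.map (PowerSeries.constantCoeff)).det = 1 := by
    rw [← RingHom.mapMatrix_apply, ← RingHom.map_det, ha, map_one]
  rw [Matrix.det_fin_three] at hdet
  simp only [Matrix.map_apply, h21, h31, mul_zero, zero_mul, sub_zero, add_zero,
    zero_sub, neg_mul, mul_neg] at hdet
  set b00 := PowerSeries.constantCoeff (a 0 0)
  set b01 := PowerSeries.constantCoeff (a 0 1)
  set b02 := PowerSeries.constantCoeff (a 0 2)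
  set b11 := PowerSeries.constantCoeff (a 1 1)
  set b12 := PowerSeries.constantCoeff (a 1 2)
  set b21 := PowerSeries.constantCoeff (a 2 1)
  set b22 := PowerSeries.constantCoeff (a 2 2)
  have hd : b11 * b22 - b12 * b21 ≠ 0 := by
    intro h
    have h1 : b00 * (b11 * b22 - b12 * b21) = 1 := by linear_combination hdet
    rw [h, mul_zero] at h1
    exact one_ne_zero h1.symm
  set d := b11 * b22 - b12 * b21 with hdd
  refine ⟨⟨(b01 * b22 - b02 * b21) / d, (b11 * b02 - b12 * b01) / d⟩, ⟨?_, ?_⟩, ?_⟩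
  · simp only [map_sub, map_mul, PowerSeries.constantCoeff_C]
    field_simp
    ring
  · simp only [map_sub, map_mul, PowerSeries.constantCoeff_C]
    field_simp
    ring
  · rintro ⟨y1, y2⟩ ⟨e1, e2⟩
    simp only [map_sub, map_mul, PowerSeries.constantCoeff_C] at e1 e2
    have e1' : b01 - y1 * b11 - y2 * b21 = 0 := e1
    have e2' : b02 - y1 * b12 - y2 * b22 = 0 := e2
    have hy1 : y1 = (b01 * b22 - b02 * b21) / d := by
      rw [eq_div_iff hd, hdd]
      linear_combination b21 * e2' - b22 * e1'
    have hy2 : y2 = (b11 * b02 - b12 * b01) / d := by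
      rw [eq_div_iff hd, hdd]
      linear_combination b12 * e1' - b11 * e2'
    simp [hy1, hy2]
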